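/- arXiv:1212.5877 — 2 statements merged into one kernel-verified Lean document; each statement's English description precedes it below -/
import Mathlib

section
/- If M is totally unimodular and b is an integer vector, then every vertex (extreme point) of the polyhedron P = {x : Mx = b, x ≥ 0} has all integer coordinates. -/
open Matrix Set Submodule

lemma exists_rows_isUnit {m ι : Type*} [Fintype m] [Fintype ι] [DecidableEq ι]
    (A : Matrix m ι ℝ) (h : LinearIndependent ℝ (fun j => Aᵀ j)) :
    ∃ r : ι → m, Function.Injective r ∧ IsUnit (A.submatrix r id) := by
  classical
  have hrankA : A.rank = Fintype.card ι := by
    rw [Matrix.rank, Matrix.range_mulVecLin]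
    exact finrank_span_eq_card h
  have hspan : span ℝ (range (fun i => A i)) = ⊤ := by
    apply Submodule.eq_top_of_finrank_eq
    have h1 : Aᵀ.rank = Fintype.card ι := by rw [Matrix.rank_transpose]; exact hrankA
    have h2 : Aᵀ.rank = Module.finrank ℝ (span ℝ (range (fun i => A i))) := by
      rw [Matrix.rank, Matrix.range_mulVecLin] <;> rfl
    rw [← h2, h1, Module.finrank_fintype_fun_eq_card]
  obtain ⟨bset, hbsub, hbspan, hbind⟩ := exists_linearIndependent ℝ (range (fun i => A i))
  rw [hspan] at hbspan
  haveI : Fintype bset := ((Set.finite_range _).subset hbsub).fintype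
  let B : Module.Basis bset ℝ (ι → ℝ) := Module.Basis.mk hbind (by rw [Subtype.range_coe, hbspan])
  have hcard : Fintype.card bset = Fintype.card ι := by
    have := Module.finrank_eq_card_basis B
    rw [Module.finrank_fintype_fun_eq_card] at this
    omega
  let e : ι ≃ bset := Fintype.equivOfCardEq hcard.symm
  have hmem : ∀ s : ι, ((e s : ι → ℝ)) ∈ range (fun i => A i) := fun s => hbsub (e s).2
  let r : ι → m := fun s => (hmem s).choose
  have hr : ∀ s, A (r s) = (e s : ι → ℝ) := fun s => (hmem s).choose_spec
  have hrinj : Function.Injective r := by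
    intro s t hst
    have : (e s : ι → ℝ) = (e t : ι → ℝ) := by rw [← hr s, ← hr t, hst]
    exact e.injective (Subtype.ext this)
  refine ⟨r, hrinj, ?_⟩
  rw [← Matrix.linearIndependent_rows_iff_isUnit]
  have : (fun s => (A.submatrix r id) s) = (Subtype.val : bset → (ι → ℝ)) ∘ e := by
    funext s; ext t; simp [Matrix.submatrix, hr s]
  change LinearIndependent ℝ (fun s => (A.submatrix r id) s)
  rw [this]
  exact hbind.comp e e.injective

/-- If `M` is totally unimodular and `b` is an integer vector, then every vertex
(extreme point) of the polyhedron `P = {x : Mx = b, x ≥ 0}` has all integer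
coordinates.  A vertex is a point of `P` that is not a proper convex combination of
two distinct points of `P`. -/
theorem TU_polyhedron_vertices_integral {m n : Type*} [Fintype m] [Fintype n]
    (M : Matrix m n ℝ) (hM : M.IsTotallyUnimodular)
    (b : m → ℝ) (hb : ∀ i, ∃ z : ℤ, b i = z)
    (P : Set (n → ℝ)) (hP : P = {x | M.mulVec x = b ∧ ∀ j, 0 ≤ x j})
    (x : n → ℝ) (hx : x ∈ P)
    (hvertex : ∀ y ∈ P, ∀ z ∈ P, ∀ θ : ℝ, θ ∈ Set.Ioo (0:ℝ) 1 →
      x = θ • y + (1 - θ) • z → y = z) :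
    ∀ j, ∃ k : ℤ, x j = k := by
  classical
  subst hP
  obtain ⟨hxb, hxpos⟩ := hx
  -- the support of x
  set S : Set n := {j | x j ≠ 0} with hS
  have hxSpos : ∀ j : S, 0 < x j := fun j => lt_of_le_of_ne (hxpos j) (Ne.symm j.2)
  -- Step 0: if M *ᵥ d = 0 and d supported on S, then d = 0 (from vertex property)
  have key : ∀ d : n → ℝ, M.mulVec d = 0 → (∀ j, x j = 0 → d j = 0) → d = 0 := by
    intro d hd hsupp
    by_contra hd0
    obtain ⟨j₀, hj₀⟩ : ∃ j, d j ≠ 0 := by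
      by_contra h; push_neg at h; exact hd0 (funext h)
    set T : Finset n := Finset.univ.filter (fun j => d j ≠ 0) with hT
    have hTne : T.Nonempty := ⟨j₀, by simp [hT, hj₀]⟩
    set ε : ℝ := T.inf' hTne (fun j => x j / |d j|) with hε
    have hεpos : 0 < ε := by
      rw [Finset.lt_inf'_iff]
      intro j hj
      have hdj : d j ≠ 0 := by simpa [hT] using hj
      have hxj : x j ≠ 0 := fun h => hdj (hsupp j h)
      exact div_pos (lt_of_le_of_ne (hxpos j) (Ne.symm hxj)) (abs_pos.mpr hdj)
    have hbound : ∀ j, ε * |d j| ≤ x j := by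
      intro j
      by_cases hdj : d j = 0
      · simpa [hdj] using hxpos j
      · have hj : j ∈ T := by simp [hT, hdj]
        have h1 : ε ≤ x j / |d j| := Finset.inf'_le _ hj
        have h2 : 0 < |d j| := abs_pos.mpr hdj
        calc ε * |d j| ≤ (x j / |d j|) * |d j| := by
              exact mul_le_mul_of_nonneg_right h1 h2.le
          _ = x j := div_mul_cancel₀ _ h2.ne'
    set y : n → ℝ := x + ε • d with hy
    set z : n → ℝ := x - ε • d with hz
    have hynn : ∀ j, 0 ≤ y j := by
      intro j
      have h1 : ε * |d j| ≤ x j := hbound j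
      have h2 : -(ε * |d j|) ≤ ε * d j := by
        have := neg_abs_le (d j)
        nlinarith [abs_nonneg (d j)]
      simp only [hy, Pi.add_apply, Pi.smul_apply, smul_eq_mul]
      linarith
    have hznn : ∀ j, 0 ≤ z j := by
      intro j
      have h1 : ε * |d j| ≤ x j := hbound j
      have h2 : ε * d j ≤ ε * |d j| := by
        have := le_abs_self (d j)
        nlinarith [abs_nonneg (d j)]
      simp only [hz, Pi.sub_apply, Pi.smul_apply, smul_eq_mul]
      linarith
    have hymem : y ∈ {x | M.mulVec x = b ∧ ∀ j, 0 ≤ x j} := by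
      refine ⟨?_, hynn⟩
      rw [hy, Matrix.mulVec_add, Matrix.mulVec_smul, hd, hxb]
      simp
    have hzmem : z ∈ {x | M.mulVec x = b ∧ ∀ j, 0 ≤ x j} := by
      refine ⟨?_, hznn⟩
      rw [hz, Matrix.mulVec_sub, Matrix.mulVec_smul, hd, hxb]
      simp
    have hcomb : x = (1/2 : ℝ) • y + (1 - 1/2 : ℝ) • z := by
      funext j
      simp only [hy, hz, Pi.add_apply, Pi.smul_apply, Pi.sub_apply, smul_eq_mul]
      ring
    have := hvertex y hymem z hzmem (1/2) ⟨by norm_num, by norm_num⟩ hcomb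
    have : ε * d j₀ = 0 := by
      have := congrFun this j₀
      simp only [hy, hz, Pi.add_apply, Pi.sub_apply, Pi.smul_apply, smul_eq_mul] at this
      linarith
    exact hj₀ (by
      rcases mul_eq_zero.mp this with h | h
      · exact absurd h hεpos.ne'
      · exact h)
  -- Step 1: columns of M over S are linearly independent
  haveI : Fintype S := Fintype.ofFinite S
  set A : Matrix m S ℝ := M.submatrix id Subtype.val with hA
  have hind : LinearIndependent ℝ (fun j => Aᵀ j) := by
    rw [Fintype.linearIndependent_iff]
    intro g hg j
    set d : n → ℝ := fun j => if h : x j ≠ 0 then g ⟨j, h⟩ else 0 with hdd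
    have hd0 : M.mulVec d = 0 := by
      funext i
      have h1 : ∀ j : n, M i j * d j = 0 ∨ j ∈ Set.toFinset S := by
        intro j
        by_cases h : x j ≠ 0
        · right; simpa [hS] using h
        · left; simp [hdd, h]
      have h2 : M.mulVec d i = ∑ j : S, M i (j : n) * d (j : n) := by
        rw [Matrix.mulVec, dotProduct]
        rw [← Finset.sum_subset (Finset.subset_univ (Set.toFinset S))]
        · rw [← Finset.sum_subtype (Set.toFinset S) (fun j => Set.mem_toFinset) (fun j => M i j * d j)]
        · intro j _ hj
          rcases h1 j with h | h
          · exact h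
          · exact absurd h hj
      have h3 := congrFun hg i
      simp only [Finset.sum_apply, Pi.smul_apply, Pi.zero_apply, smul_eq_mul] at h3
      rw [h2, Pi.zero_apply]
      rw [← h3]
      apply Finset.sum_congr rfl
      intro j _
      have : d (j : n) = g j := dif_pos j.2
      rw [this, hA]
      simp [Matrix.transpose_apply, mul_comm]
    have := key d hd0 (fun j hj => by simp [hdd, hj])
    have h9 : d (j : n) = 0 := by rw [this]; rfl
    have h10 : d (j : n) = g j := dif_pos j.2
    rw [← h10]; exact h9
  -- Step 2: extract an invertible square row submatrix
  obtain ⟨r, hrinj, hQunit⟩ := exists_rows_isUnit A hind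
  set Q : Matrix S S ℝ := A.submatrix r id with hQ
  have hQdet : IsUnit Q.det := (Matrix.isUnit_iff_isUnit_det Q).mp hQunit
  -- the restricted system
  set xS : S → ℝ := fun s => x s with hxS
  set bR : S → ℝ := fun s => b (r s) with hbR
  have hsys : Q.mulVec xS = bR := by
    funext s
    have h2 : Q.mulVec xS s = ∑ j : S, M (r s) (j : n) * x (j : n) := by
      rw [Matrix.mulVec, dotProduct]
      rfl
    have h3 : (∑ j : S, M (r s) (j : n) * x (j : n)) = ∑ j : n, M (r s) j * x j := by
      rw [← Finset.sum_subtype (Set.toFinset S) (fun j => Set.mem_toFinset) (fun j => M (r s) j * x j)]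
      apply Finset.sum_subset (Finset.subset_univ _)
      intro j _ hj
      have : x j = 0 := by
        by_contra h
        exact hj (by simpa [hS] using h)
      simp [this]
    rw [h2, h3, hbR, ← hxb]
    rfl
  -- solve: xS = Q⁻¹ *ᵥ bR
  have hsol : xS = Q⁻¹.mulVec bR := by
    rw [← hsys, Matrix.mulVec_mulVec, Matrix.nonsing_inv_mul Q hQdet, Matrix.one_mulVec]
  -- integrality data
  have hQint : ∀ s t : S, ∃ z : ℤ, Q s t = (z : ℝ) := by
    intro s t
    obtain ⟨σ, hσ⟩ := hM.apply (r s) (t : n)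
    refine ⟨(σ : ℤ), ?_⟩
    show M (r s) (t : n) = ((σ : ℤ) : ℝ)
    rw [← hσ]; cases σ <;> simp
  set Q' : Matrix S S ℤ := fun s t => (hQint s t).choose with hQ'
  have hQQ' : Q = (Int.castRingHom ℝ).mapMatrix Q' := by
    funext s t
    exact (hQint s t).choose_spec
  set b' : S → ℤ := fun s => (hb (r s)).choose with hb'
  have hbb' : ∀ s, bR s = (b' s : ℝ) := fun s => (hb (r s)).choose_spec
  -- det Q = ±1
  have hdet_range : Q.det ∈ Set.range (SignType.cast : SignType → ℝ) := by
    have := ((Matrix.isTotallyUnimodular_iff_fintype M).mp hM) S r Subtype.val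
    exact this
  have hdet : Q.det = 1 ∨ Q.det = -1 := by
    obtain ⟨σ, hσ⟩ := hdet_range
    cases σ with
    | zero => exfalso; rw [← hσ] at hQdet; simp at hQdet
    | pos => left; rw [← hσ]; rfl
    | neg => right; rw [← hσ]; rfl
  have hdetinv : Q.det⁻¹ = Q.det := by
    rcases hdet with h | h <;> rw [h] <;> norm_num
  -- conclude
  intro j
  by_cases hj : x j = 0
  · exact ⟨0, by simp [hj]⟩
  · have hjS : j ∈ S := hj
    have hxj : x j = xS ⟨j, hjS⟩ := rfl
    rw [hxj, hsol]
    -- Q⁻¹ = det⁻¹ • adjugate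
    rw [Matrix.inv_def]
    set s : S := ⟨j, hjS⟩
    have hadj : Q.adjugate = (Int.castRingHom ℝ).mapMatrix Q'.adjugate := by
      rw [(Int.castRingHom ℝ).map_adjugate, hQQ']
    have hRing : Ring.inverse Q.det = Q.det⁻¹ := by
      rw [Ring.inverse_eq_inv']
    rw [hRing, hdetinv]
    have hval : (Q.det • Q.adjugate).mulVec bR s
        = Q.det * ∑ t : S, ((Q'.adjugate s t : ℝ) * (b' t : ℝ)) := by
      rw [Matrix.smul_mulVec]
      simp only [Pi.smul_apply, smul_eq_mul]
      congr 1
      rw [Matrix.mulVec, dotProduct]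
      apply Finset.sum_congr rfl
      intro t _
      rw [hadj, hbb']
      rfl
    rw [hval]
    rcases hdet with h | h
    · exact ⟨∑ t : S, Q'.adjugate s t * b' t, by rw [h]; push_cast; ring⟩
    · exact ⟨-∑ t : S, Q'.adjugate s t * b' t, by rw [h]; push_cast; ring⟩
end

section
/- The tracking polytope equals the convex hull of characteristic vectors of track partitions: P = {(f,g,h) ∈ ℝ_{≥0}^{|A|+2|V|} : ∀v, g(v) + f(δ⁻(v)) = 1, h(v) + f(δ⁺(v)) = 1} is exactly the convex hull of the {0,1}-vectors corresponding to track partitions of V. -/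
open Classical
open Finset

/-- A track partition of a finite timestamped point set `V`: a collection of
vertex-disjoint, time-increasing, simple directed paths (nonempty lists) covering `V`. -/
structure TrackPartition (V : Type*) [Fintype V] (t : V → ℝ) where
  paths : Finset (List V)
  nonempty : ∀ p ∈ paths, p ≠ []
  nodup : ∀ p ∈ paths, p.Nodup
  increasing : ∀ p ∈ paths, p.Chain' (fun u v => t u < t v)
  cover : ∀ v : V, ∃ p ∈ paths, v ∈ p
  disjoint : ∀ p ∈ paths, ∀ q ∈ paths, p ≠ q → ∀ v, v ∈ p → v ∉ q

variable {V : Type*} [Fintype V] {t : V → ℝ}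

/-- `u` and `w` are consecutive entries (in this order) of the list `p`. -/
def consecIn (p : List V) (u w : V) : Prop :=
  ∃ i : ℕ, p[i]? = some u ∧ p[i + 1]? = some w

/-- Characteristic vector of the arcs used by a track partition. -/
noncomputable def charF (T : TrackPartition V t) (u w : V) : ℝ :=
  if ∃ p ∈ T.paths, consecIn p u w then 1 else 0

/-- Characteristic vector of the starting points of a track partition. -/
noncomputable def charG (T : TrackPartition V t) (v : V) : ℝ :=
  if ∃ p ∈ T.paths, p.head? = some v then 1 else 0

/-- Characteristic vector of the ending points of a track partition. -/
noncomputable def charH (T : TrackPartition V t) (v : V) : ℝ :=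
  if ∃ p ∈ T.paths, p.getLast? = some v then 1 else 0

/-- number of points strictly later than `v`. -/
noncomputable def upCard (t : V → ℝ) [Fintype V] (v : V) : ℕ :=
  (Finset.univ.filter (fun u => t v < t u)).card

lemma upCard_lt {v w : V} (h : t v < t w) : upCard t w < upCard t v := by
  apply Finset.card_lt_card
  constructor
  · intro u hu
    simp only [mem_filter, mem_univ, true_and] at *
    exact h.trans hu
  · intro hsub
    have := hsub (by simp [h] : w ∈ Finset.univ.filter (fun u => t v < t u))
    simp at this

/-- number of points strictly earlier than `v`. -/
noncomputable def downCard (t : V → ℝ) [Fintype V] (v : V) : ℕ :=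
  (Finset.univ.filter (fun u => t u < t v)).card

lemma downCard_lt {u v : V} (h : t u < t v) : downCard t u < downCard t v := by
  apply Finset.card_lt_card
  constructor
  · intro x hx
    simp only [mem_filter, mem_univ, true_and] at *
    exact hx.trans h
  · intro hsub
    have := hsub (by simp [h] : u ∈ Finset.univ.filter (fun x => t x < t v))
    simp at this

/-- follow `next` starting from `v`. -/
noncomputable def pathFrom (t : V → ℝ) [Fintype V] (next : V → Option V)
    (hnext : ∀ u v, next u = some v → t u < t v) (v : V) : List V :=
  v :: (match h : next v with
    | some w => pathFrom t next hnext w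
    | none => [])
termination_by upCard t v
decreasing_by exact upCard_lt (hnext _ _ h)

section PathLemmas

variable {next : V → Option V} {hnext : ∀ u v, next u = some v → t u < t v}

lemma pathFrom_none {v : V} (h : next v = none) :
    pathFrom t next hnext v = [v] := by
  rw [pathFrom.eq_def]; split <;> simp_all

lemma pathFrom_some {v w : V} (h : next v = some w) :
    pathFrom t next hnext v = v :: pathFrom t next hnext w := by
  rw [pathFrom.eq_def]; split <;> simp_all

lemma pathFrom_ne_nil (v : V) : pathFrom t next hnext v ≠ [] := by
  rw [pathFrom.eq_def]; simp

lemma head?_pathFrom (v : V) : (pathFrom t next hnext v).head? = some v := by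
  rw [pathFrom.eq_def]; rfl

lemma chain'_pathFrom (v : V) :
    (pathFrom t next hnext v).Chain' (fun a b => t a < t b) := by
  cases h : next v with
  | none => rw [pathFrom_none h]; exact List.isChain_singleton _
  | some w =>
    rw [pathFrom_some h]; unfold List.Chain'; rw [List.isChain_cons]
    refine ⟨?_, chain'_pathFrom w⟩
    intro b hb
    have : (pathFrom t next hnext w).head? = some b := hb
    rw [head?_pathFrom] at this
    cases this
    exact hnext _ _ h
termination_by upCard t v
decreasing_by exact upCard_lt (hnext _ _ h)

lemma nodup_pathFrom (v : V) : (pathFrom t next hnext v).Nodup := by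
  haveI : IsTrans V (fun a b : V => t a < t b) := ⟨fun _ _ _ => lt_trans⟩
  have hp := List.isChain_iff_pairwise.mp (chain'_pathFrom (hnext := hnext) v)
  exact hp.imp (fun hlt he => absurd (he ▸ hlt) (lt_irrefl _))

lemma mem_pathFrom {v w : V} :
    w ∈ pathFrom t next hnext v ↔
      Relation.ReflTransGen (fun a b => next a = some b) v w := by
  cases h : next v with
  | none =>
    rw [pathFrom_none h]
    simp only [List.mem_singleton]
    constructor
    · rintro rfl; exact Relation.ReflTransGen.refl
    · intro hr
      rcases Relation.ReflTransGen.cases_head hr with rfl | ⟨c, hc, _⟩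
      · rfl
      · rw [h] at hc; cases hc
  | some u =>
    rw [pathFrom_some h, List.mem_cons, mem_pathFrom]
    constructor
    · rintro (rfl | hr)
      · exact Relation.ReflTransGen.refl
      · exact Relation.ReflTransGen.head h hr
    · intro hr
      rcases Relation.ReflTransGen.cases_head hr with rfl | ⟨c, hc, hcw⟩
      · exact Or.inl rfl
      · rw [h] at hc; cases hc; exact Or.inr hcw
termination_by upCard t v
decreasing_by exact upCard_lt (hnext _ _ h)

lemma getLast?_cons_of_ne_nil {l : List V} (h : l ≠ []) (a : V) :
    (a :: l).getLast? = l.getLast? := by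
  cases l with
  | nil => exact absurd rfl h
  | cons b m => exact List.getLast?_cons_cons

lemma getLast?_pathFrom {v a : V} :
    (pathFrom t next hnext v).getLast? = some a ↔
      a ∈ pathFrom t next hnext v ∧ next a = none := by
  cases h : next v with
  | none =>
    rw [pathFrom_none h]
    constructor
    · rintro ⟨rfl⟩; simpa using h
    · rintro ⟨ha, -⟩
      cases List.mem_singleton.mp ha
      rfl
  | some u =>
    rw [pathFrom_some h, getLast?_cons_of_ne_nil (pathFrom_ne_nil u),
      getLast?_pathFrom, List.mem_cons]
    constructor
    · rintro ⟨ha, hn⟩; exact ⟨Or.inr ha, hn⟩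
    · rintro ⟨rfl | ha, hn⟩
      · rw [h] at hn; cases hn
      · exact ⟨ha, hn⟩
termination_by upCard t v
decreasing_by exact upCard_lt (hnext _ _ h)

end PathLemmas

section PathLemmas2

variable {next : V → Option V} {hnext : ∀ u v, next u = some v → t u < t v}

lemma consecIn_pathFrom {v a b : V} :
    consecIn (pathFrom t next hnext v) a b ↔
      a ∈ pathFrom t next hnext v ∧ next a = some b := by
  cases h : next v with
  | none =>
    rw [pathFrom_none h]
    constructor
    · rintro ⟨i, h1, h2⟩
      rcases i with _ | i <;> simp at h2
    · rintro ⟨ha, hab⟩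
      cases List.mem_singleton.mp ha
      rw [h] at hab; cases hab
  | some u =>
    rw [pathFrom_some h]
    constructor
    · rintro ⟨i, h1, h2⟩
      rcases i with _ | i
      · rw [List.getElem?_cons_zero] at h1
        cases h1
        rw [List.getElem?_cons_succ, ← List.head?_eq_getElem?, head?_pathFrom] at h2
        cases h2
        exact ⟨List.mem_cons_self, h⟩
      · rw [List.getElem?_cons_succ] at h1 h2
        have := consecIn_pathFrom (v := u) (a := a) (b := b) |>.mp ⟨i, h1, h2⟩
        exact ⟨List.mem_cons_of_mem _ this.1, this.2⟩
    · rintro ⟨ha, hab⟩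
      rcases List.mem_cons.mp ha with rfl | ha
      · rw [h] at hab; cases hab
        refine ⟨0, rfl, ?_⟩
        rw [List.getElem?_cons_succ, ← List.head?_eq_getElem?, head?_pathFrom]
      · obtain ⟨i, h1, h2⟩ := consecIn_pathFrom (v := u) |>.mpr ⟨ha, hab⟩
        exact ⟨i + 1, by rw [List.getElem?_cons_succ]; exact h1,
          by rw [List.getElem?_cons_succ]; exact h2⟩
termination_by upCard t v
decreasing_by all_goals exact upCard_lt (hnext _ _ h)

end PathLemmas2

/-- follow `prev` backwards to the start of the path through `v`. -/
noncomputable def root (t : V → ℝ) [Fintype V] (prev : V → Option V)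
    (hprev : ∀ u v, prev v = some u → t u < t v) (v : V) : V :=
  match h : prev v with
  | some u => root t prev hprev u
  | none => v
termination_by downCard t v
decreasing_by exact downCard_lt (hprev _ _ h)

section RootLemmas

variable {prev : V → Option V} {hprev : ∀ u v, prev v = some u → t u < t v}
variable {next : V → Option V} {hnext : ∀ u v, next u = some v → t u < t v}

lemma root_none {v : V} (h : prev v = none) : root t prev hprev v = v := by
  rw [root.eq_def]; split <;> simp_all

lemma root_some {v u : V} (h : prev v = some u) :
    root t prev hprev v = root t prev hprev u := by
  rw [root.eq_def]; split <;> simp_all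

lemma prev_root (v : V) : prev (root t prev hprev v) = none := by
  cases h : prev v with
  | none => rw [root_none h]; exact h
  | some u => rw [root_some h]; exact prev_root u
termination_by downCard t v
decreasing_by exact downCard_lt (hprev _ _ h)

lemma reflTransGen_root (hpn : ∀ u v, prev v = some u ↔ next u = some v) (v : V) :
    Relation.ReflTransGen (fun a b => next a = some b) (root t prev hprev v) v := by
  cases h : prev v with
  | none => rw [root_none h]
  | some u =>
    rw [root_some h]
    exact Relation.ReflTransGen.tail (reflTransGen_root hpn u) ((hpn u v).mp h)
termination_by downCard t v
decreasing_by exact downCard_lt (hprev _ _ h)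

lemma root_eq_of_reflTransGen (hpn : ∀ u v, prev v = some u ↔ next u = some v)
    {a b : V} (h : Relation.ReflTransGen (fun a b => next a = some b) a b) :
    root t prev hprev b = root t prev hprev a := by
  induction h with
  | refl => rfl
  | tail hbc hstep ih => rw [root_some ((hpn _ _).mpr hstep)]; exact ih

end RootLemmas
section PermTP

variable {V : Type*} [Fintype V] {t : V → ℝ}

/-- successor function of a permutation of `V ⊕ V`. -/
def σnext (σ : Equiv.Perm (V ⊕ V)) : V → Option V := fun u =>
  match σ (Sum.inl u) with
  | Sum.inl v => some v
  | Sum.inr _ => none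

/-- predecessor function of a permutation of `V ⊕ V`. -/
def σprev (σ : Equiv.Perm (V ⊕ V)) : V → Option V := fun v =>
  match σ.symm (Sum.inl v) with
  | Sum.inl u => some u
  | Sum.inr _ => none

lemma σnext_eq_some {σ : Equiv.Perm (V ⊕ V)} {u v : V} :
    σnext σ u = some v ↔ σ (Sum.inl u) = Sum.inl v := by
  unfold σnext; cases h : σ (Sum.inl u) <;> simp [h]

lemma σprev_eq_some {σ : Equiv.Perm (V ⊕ V)} {u v : V} :
    σprev σ v = some u ↔ σ.symm (Sum.inl v) = Sum.inl u := by
  unfold σprev; cases h : σ.symm (Sum.inl v) <;> simp [h]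

lemma σpn (σ : Equiv.Perm (V ⊕ V)) (u v : V) :
    σprev σ v = some u ↔ σnext σ u = some v := by
  rw [σprev_eq_some, σnext_eq_some, Equiv.symm_apply_eq, eq_comm]

lemma σnext_eq_none {σ : Equiv.Perm (V ⊕ V)} {u : V} {k : V}
    (h : σ (Sum.inl u) = Sum.inr k) : σnext σ u = none := by
  unfold σnext; rw [h]

lemma σprev_eq_none {σ : Equiv.Perm (V ⊕ V)} {v : V} {k : V}
    (h : σ.symm (Sum.inl v) = Sum.inr k) : σprev σ v = none := by
  unfold σprev; rw [h]

variable (σ : Equiv.Perm (V ⊕ V))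

lemma hσnext (hσ : ∀ u v : V, σ (Sum.inl u) = Sum.inl v → t u < t v) : ∀ u v : V, σnext σ u = some v → t u < t v :=
  fun u v h => hσ u v (σnext_eq_some.mp h)

lemma hσprev (hσ : ∀ u v : V, σ (Sum.inl u) = Sum.inl v → t u < t v) : ∀ u v : V, σprev σ v = some u → t u < t v :=
  fun u v h => hσnext σ hσ u v ((σpn σ u v).mp h)

/-- The track partition induced by a time-respecting permutation of `V ⊕ V`. -/
noncomputable def permTP (hσ : ∀ u v : V, σ (Sum.inl u) = Sum.inl v → t u < t v) : TrackPartition V t where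
  paths := (univ.filter fun v => σprev σ v = none).image
    (pathFrom t (σnext σ) (hσnext σ hσ))
  nonempty := by
    intro p hp
    obtain ⟨a, -, rfl⟩ := mem_image.mp hp
    exact pathFrom_ne_nil a
  nodup := by
    intro p hp
    obtain ⟨a, -, rfl⟩ := mem_image.mp hp
    exact nodup_pathFrom a
  increasing := by
    intro p hp
    obtain ⟨a, -, rfl⟩ := mem_image.mp hp
    exact chain'_pathFrom a
  cover := by
    intro v
    refine ⟨pathFrom t (σnext σ) (hσnext σ hσ)
      (root t (σprev σ) (hσprev σ hσ) v), ?_, ?_⟩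
    · exact mem_image.mpr ⟨_, mem_filter.mpr ⟨mem_univ _, prev_root v⟩, rfl⟩
    · exact mem_pathFrom.mpr (reflTransGen_root (σpn σ) v)
  disjoint := by
    intro p hp q hq hne v hvp hvq
    obtain ⟨a, ha, rfl⟩ := mem_image.mp hp
    obtain ⟨b, hb, rfl⟩ := mem_image.mp hq
    have hra := root_eq_of_reflTransGen (hprev := hσprev σ hσ) (σpn σ)
      (mem_pathFrom.mp hvp)
    have hrb := root_eq_of_reflTransGen (hprev := hσprev σ hσ) (σpn σ)
      (mem_pathFrom.mp hvq)
    rw [root_none (mem_filter.mp ha).2] at hra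
    rw [root_none (mem_filter.mp hb).2] at hrb
    exact hne (by rw [hra.symm.trans hrb])

lemma charF_permTP (hσ : ∀ u v : V, σ (Sum.inl u) = Sum.inl v → t u < t v) (u w : V) :
    charF (permTP σ hσ) u w = if σnext σ u = some w then 1 else 0 := by
  unfold charF
  congr 1
  simp only [eq_iff_iff]
  constructor
  · rintro ⟨p, hp, hc⟩
    obtain ⟨a, -, rfl⟩ := mem_image.mp hp
    exact (consecIn_pathFrom.mp hc).2
  · intro h
    refine ⟨pathFrom t (σnext σ) (hσnext σ hσ)
      (root t (σprev σ) (hσprev σ hσ) u), ?_, ?_⟩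
    · exact mem_image.mpr ⟨_, mem_filter.mpr ⟨mem_univ _, prev_root u⟩, rfl⟩
    · exact consecIn_pathFrom.mpr
        ⟨mem_pathFrom.mpr (reflTransGen_root (σpn σ) u), h⟩

lemma charG_permTP (hσ : ∀ u v : V, σ (Sum.inl u) = Sum.inl v → t u < t v) (v : V) :
    charG (permTP σ hσ) v = if σprev σ v = none then 1 else 0 := by
  unfold charG
  congr 1
  simp only [eq_iff_iff]
  constructor
  · rintro ⟨p, hp, hc⟩
    obtain ⟨a, ha, rfl⟩ := mem_image.mp hp
    rw [head?_pathFrom] at hc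
    cases hc
    exact (mem_filter.mp ha).2
  · intro h
    exact ⟨pathFrom t (σnext σ) (hσnext σ hσ) v,
      mem_image.mpr ⟨v, mem_filter.mpr ⟨mem_univ _, h⟩, rfl⟩, head?_pathFrom v⟩

lemma charH_permTP (hσ : ∀ u v : V, σ (Sum.inl u) = Sum.inl v → t u < t v) (v : V) :
    charH (permTP σ hσ) v = if σnext σ v = none then 1 else 0 := by
  unfold charH
  congr 1
  simp only [eq_iff_iff]
  constructor
  · rintro ⟨p, hp, hc⟩
    obtain ⟨a, -, rfl⟩ := mem_image.mp hp
    exact (getLast?_pathFrom.mp hc).2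
  · intro h
    refine ⟨pathFrom t (σnext σ) (hσnext σ hσ)
      (root t (σprev σ) (hσprev σ hσ) v), ?_, ?_⟩
    · exact mem_image.mpr ⟨_, mem_filter.mpr ⟨mem_univ _, prev_root v⟩, rfl⟩
    · exact getLast?_pathFrom.mpr
        ⟨mem_pathFrom.mpr (reflTransGen_root (σpn σ) v), h⟩

/-- The trivial track partition into singleton paths. -/
noncomputable def singletonTP (t : V → ℝ) [Fintype V] : TrackPartition V t where
  paths := univ.image (fun v => [v])
  nonempty := by
    intro p hp
    obtain ⟨a, -, rfl⟩ := mem_image.mp hp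
    simp
  nodup := by
    intro p hp
    obtain ⟨a, -, rfl⟩ := mem_image.mp hp
    simp
  increasing := by
    intro p hp
    obtain ⟨a, -, rfl⟩ := mem_image.mp hp
    exact List.isChain_singleton _
  cover := fun v => ⟨[v], mem_image.mpr ⟨v, mem_univ v, rfl⟩, by simp⟩
  disjoint := by
    intro p hp q hq hne v hvp hvq
    obtain ⟨a, -, rfl⟩ := mem_image.mp hp
    obtain ⟨b, -, rfl⟩ := mem_image.mp hq
    cases List.mem_singleton.mp hvp
    cases List.mem_singleton.mp hvq
    exact hne rfl

end PermTP
section CharInP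

variable {V : Type*} [Fintype V] {t : V → ℝ}

omit [Fintype V] in
lemma chain'_rel_of_get? {r : V → V → Prop} :
    ∀ {p : List V} {i : ℕ} {u w : V}, p.Chain' r →
      p[i]? = some u → p[i + 1]? = some w → r u w
  | [], i, u, w, _, h1, _ => by simp at h1
  | a :: l, 0, u, w, hc, h1, h2 => by
    rw [List.getElem?_cons_zero] at h1
    cases h1
    rw [List.getElem?_cons_succ, ← List.head?_eq_getElem?] at h2
    exact (List.isChain_cons.mp hc).1 w h2
  | a :: l, (i + 1), u, w, hc, h1, h2 => by
    rw [List.getElem?_cons_succ] at h1 h2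
    exact chain'_rel_of_get? (List.isChain_cons.mp hc).2 h1 h2

lemma charF_nonneg (T : TrackPartition V t) (u w : V) : 0 ≤ charF T u w := by
  unfold charF; split <;> norm_num

lemma charG_nonneg (T : TrackPartition V t) (v : V) : 0 ≤ charG T v := by
  unfold charG; split <;> norm_num

lemma charH_nonneg (T : TrackPartition V t) (v : V) : 0 ≤ charH T v := by
  unfold charH; split <;> norm_num

lemma charF_pos_time (T : TrackPartition V t) {u w : V} (h : charF T u w ≠ 0) :
    t u < t w := by
  unfold charF at h
  rw [ne_eq, ite_eq_right_iff] at h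
  push_neg at h
  obtain ⟨⟨p, hp, i, h1, h2⟩, -⟩ := h
  exact chain'_rel_of_get? (r := fun a b => t a < t b) (T.increasing p hp) h1 h2

/-- the unique path through a given vertex -/
lemma path_unique (T : TrackPartition V t) {p : List V} (hp : p ∈ T.paths)
    {v : V} (hv : v ∈ p) {q : List V} (hq : q ∈ T.paths) (hvq : v ∈ q) : q = p := by
  by_contra hne
  exact T.disjoint q hq p hp hne v hvq hv

lemma sum_charF_in (T : TrackPartition V t) (v : V) :
    charG T v + ∑ u, charF T u v = 1 := by
  obtain ⟨p, hp, hv⟩ := T.cover v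
  obtain ⟨i, hi⟩ := List.mem_iff_getElem?.mp hv
  have hnd := T.nodup p hp
  cases i with
  | zero =>
    have hgv : charG T v = 1 := by
      unfold charG
      exact if_pos ⟨p, hp, by rw [List.head?_eq_getElem?]; exact hi⟩
    have hf : ∀ u, charF T u v = 0 := by
      intro u
      unfold charF
      rw [if_neg]
      rintro ⟨q, hq, j, h1, h2⟩
      have hvq : v ∈ q := List.mem_of_getElem? h2
      cases path_unique T hp hv hq hvq
      have h0 : (0 : ℕ) < p.length := (List.getElem?_eq_some_iff.mp hi).1
      have := (List.getElem?_inj h0 hnd).mp (hi.trans h2.symm)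
      omega
    rw [hgv, Finset.sum_congr rfl (fun u _ => hf u)]
    simp
  | succ j =>
    have hj : j < p.length := by
      have := (List.getElem?_eq_some_iff.mp hi).1; omega
    obtain ⟨u0, hu0⟩ : ∃ u0, p[j]? = some u0 :=
      ⟨p[j], List.getElem?_eq_getElem hj⟩
    have hG : charG T v = 0 := by
      unfold charG
      rw [if_neg]
      rintro ⟨q, hq, hh⟩
      have hvq : v ∈ q := by
        rw [List.head?_eq_getElem?] at hh; exact List.mem_of_getElem? hh
      cases path_unique T hp hv hq hvq
      rw [List.head?_eq_getElem?] at hh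
      have h0 : (0 : ℕ) < p.length := (List.getElem?_eq_some_iff.mp hh).1
      have := (List.getElem?_inj h0 hnd).mp (hh.trans hi.symm)
      omega
    have key : ∀ u, (∃ q ∈ T.paths, consecIn q u v) ↔ u = u0 := by
      intro u
      constructor
      · rintro ⟨q, hq, k, h1, h2⟩
        have hvq : v ∈ q := List.mem_of_getElem? h2
        cases path_unique T hp hv hq hvq
        have hk : k + 1 < p.length := (List.getElem?_eq_some_iff.mp h2).1
        have hkj : k + 1 = j + 1 := (List.getElem?_inj hk hnd).mp (h2.trans hi.symm)
        have : k = j := by omega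
        subst this
        rw [h1] at hu0
        exact (Option.some_injective _ hu0.symm).symm
      · rintro rfl
        exact ⟨p, hp, j, hu0, hi⟩
    have : ∀ u, charF T u v = if u = u0 then (1 : ℝ) else 0 := by
      intro u; unfold charF
      simp only [key u]
    rw [hG, Finset.sum_congr rfl (fun u _ => this u), Finset.sum_ite_eq' univ u0 (fun _ => (1:ℝ))]
    simp

lemma sum_charF_out (T : TrackPartition V t) (v : V) :
    charH T v + ∑ w, charF T v w = 1 := by
  obtain ⟨p, hp, hv⟩ := T.cover v
  obtain ⟨i, hi⟩ := List.mem_iff_getElem?.mp hv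
  have hnd := T.nodup p hp
  have hilen : i < p.length := (List.getElem?_eq_some_iff.mp hi).1
  have hplen : p.length ≠ 0 := by omega
  by_cases hlast : i + 1 = p.length
  · have hH : charH T v = 1 := by
      unfold charH
      refine if_pos ⟨p, hp, ?_⟩
      rw [List.getLast?_eq_getElem?]
      have : p.length - 1 = i := by omega
      rw [this]; exact hi
    have hf : ∀ w, charF T v w = 0 := by
      intro w
      unfold charF
      rw [if_neg]
      rintro ⟨q, hq, k, h1, h2⟩
      have hvq : v ∈ q := List.mem_of_getElem? h1
      cases path_unique T hp hv hq hvq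
      have hk : k < p.length := (List.getElem?_eq_some_iff.mp h1).1
      have hki : k = i := (List.getElem?_inj hk hnd).mp (h1.trans hi.symm)
      subst hki
      rw [show k + 1 = p.length from hlast] at h2
      rw [List.getElem?_eq_none (le_refl _)] at h2
      cases h2
    rw [hH, Finset.sum_congr rfl (fun w _ => hf w)]
    simp
  · have hi1 : i + 1 < p.length := by omega
    obtain ⟨w0, hw0⟩ : ∃ w0, p[i + 1]? = some w0 :=
      ⟨p[i + 1], List.getElem?_eq_getElem hi1⟩
    have hH : charH T v = 0 := by
      unfold charH
      rw [if_neg]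
      rintro ⟨q, hq, hh⟩
      rw [List.getLast?_eq_getElem?] at hh
      have hvq : v ∈ q := List.mem_of_getElem? hh
      cases path_unique T hp hv hq hvq
      have h0 : p.length - 1 < p.length := by omega
      have := (List.getElem?_inj h0 hnd).mp (hh.trans hi.symm)
      omega
    have key : ∀ w, (∃ q ∈ T.paths, consecIn q v w) ↔ w = w0 := by
      intro w
      constructor
      · rintro ⟨q, hq, k, h1, h2⟩
        have hvq : v ∈ q := List.mem_of_getElem? h1
        cases path_unique T hp hv hq hvq
        have hk : k < p.length := (List.getElem?_eq_some_iff.mp h1).1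
        have hki : k = i := (List.getElem?_inj hk hnd).mp (h1.trans hi.symm)
        subst hki
        rw [h2] at hw0
        exact (Option.some_injective _ hw0.symm).symm
      · rintro rfl
        exact ⟨p, hp, i, hi, hw0⟩
    have : ∀ w, charF T v w = if w = w0 then (1 : ℝ) else 0 := by
      intro w; unfold charF
      simp only [key w]
    rw [hH, Finset.sum_congr rfl (fun w _ => this w), Finset.sum_ite_eq' univ w0 (fun _ => (1:ℝ))]
    simp

end CharInP
section MatrixLayer

variable {V : Type*} [Fintype V] {t : V → ℝ}

/-- The doubly stochastic matrix on `V ⊕ V` associated to a point of the polytope. -/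
noncomputable def trackMatrix (x : (V → V → ℝ) × (V → ℝ) × (V → ℝ)) :
    Matrix (V ⊕ V) (V ⊕ V) ℝ := fun i j =>
  match i, j with
  | Sum.inl u, Sum.inl v => x.1 u v
  | Sum.inl u, Sum.inr _ => x.2.2 u / (Fintype.card V)
  | Sum.inr _, Sum.inl v => x.2.1 v / (Fintype.card V)
  | Sum.inr _, Sum.inr _ => (1 - (∑ v, x.2.1 v) / (Fintype.card V)) / (Fintype.card V)

lemma trackMatrix_mem [Nonempty V] (x : (V → V → ℝ) × (V → ℝ) × (V → ℝ))
    (h1 : ∀ u w, 0 ≤ x.1 u w) (h2 : ∀ v, 0 ≤ x.2.1 v) (h3 : ∀ v, 0 ≤ x.2.2 v)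
    (h5 : ∀ v, x.2.1 v + ∑ u, x.1 u v = 1) (h6 : ∀ v, x.2.2 v + ∑ w, x.1 v w = 1) :
    trackMatrix x ∈ doublyStochastic ℝ (V ⊕ V) := by
  have hn : (0 : ℝ) < (Fintype.card V : ℝ) := by
    exact_mod_cast Fintype.card_pos
  have hn0 : ((Fintype.card V : ℕ) : ℝ) ≠ 0 := ne_of_gt hn
  have hg1 : ∀ v, x.2.1 v ≤ 1 := by
    intro v
    have hs : 0 ≤ ∑ u, x.1 u v := Finset.sum_nonneg fun u _ => h1 u v
    linarith [h5 v]
  have hSn : (∑ v, x.2.1 v) ≤ (Fintype.card V : ℝ) := by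
    calc (∑ v, x.2.1 v) ≤ ∑ _v : V, (1 : ℝ) := Finset.sum_le_sum fun v _ => hg1 v
    _ = (Fintype.card V : ℝ) := by simp
  have hS : (∑ v, x.2.1 v) = ∑ v, x.2.2 v := by
    have e1 : ∑ v, (x.2.1 v + ∑ u, x.1 u v) = ∑ v, (x.2.2 v + ∑ w, x.1 v w) := by
      rw [Finset.sum_congr rfl (fun v _ => h5 v), Finset.sum_congr rfl (fun v _ => h6 v)]
    rw [Finset.sum_add_distrib, Finset.sum_add_distrib, Finset.sum_comm] at e1
    linarith
  rw [mem_doublyStochastic_iff_sum]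
  refine ⟨?_, ?_, ?_⟩
  · rintro (u | u) (v | v)
    · exact h1 u v
    · exact div_nonneg (h3 u) hn.le
    · exact div_nonneg (h2 v) hn.le
    · refine div_nonneg ?_ hn.le
      rw [sub_nonneg]
      exact (div_le_one hn).mpr hSn
  · rintro (u | k)
    · rw [Fintype.sum_sum_type]
      show (∑ v, x.1 u v) + (∑ _v : V, x.2.2 u / (Fintype.card V)) = 1
      rw [Finset.sum_const, Finset.card_univ, nsmul_eq_mul]
      have : (Fintype.card V : ℝ) * (x.2.2 u / (Fintype.card V)) = x.2.2 u := by
        field_simp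
      rw [this]
      linarith [h6 u]
    · rw [Fintype.sum_sum_type]
      show (∑ v, x.2.1 v / (Fintype.card V)) +
        (∑ _v : V, (1 - (∑ v, x.2.1 v) / (Fintype.card V)) / (Fintype.card V)) = 1
      rw [Finset.sum_const, Finset.card_univ, nsmul_eq_mul, ← Finset.sum_div]
      have : (Fintype.card V : ℝ) *
          ((1 - (∑ v, x.2.1 v) / (Fintype.card V)) / (Fintype.card V)) =
          1 - (∑ v, x.2.1 v) / (Fintype.card V) := by
        field_simp
      rw [this]
      ring
  · rintro (v | k)
    · rw [Fintype.sum_sum_type]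
      show (∑ u, x.1 u v) + (∑ _u : V, x.2.1 v / (Fintype.card V)) = 1
      rw [Finset.sum_const, Finset.card_univ, nsmul_eq_mul]
      have : (Fintype.card V : ℝ) * (x.2.1 v / (Fintype.card V)) = x.2.1 v := by
        field_simp
      rw [this]
      linarith [h5 v]
    · rw [Fintype.sum_sum_type]
      show (∑ u, x.2.2 u / (Fintype.card V)) +
        (∑ _u : V, (1 - (∑ v, x.2.1 v) / (Fintype.card V)) / (Fintype.card V)) = 1
      rw [Finset.sum_const, Finset.card_univ, nsmul_eq_mul, ← Finset.sum_div, ← hS]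
      have : (Fintype.card V : ℝ) *
          ((1 - (∑ v, x.2.1 v) / (Fintype.card V)) / (Fintype.card V)) =
          1 - (∑ v, x.2.1 v) / (Fintype.card V) := by
        field_simp
      rw [this]
      ring

end MatrixLayer
section PermTP'

variable {V : Type*} [Fintype V] {t : V → ℝ}

/-- The track partition of an arbitrary permutation: the induced one when the
permutation respects time, the trivial one otherwise. -/
noncomputable def permTP' (t : V → ℝ) [Fintype V] (σ : Equiv.Perm (V ⊕ V)) :
    TrackPartition V t :=
  if h : ∀ u v : V, σ (Sum.inl u) = Sum.inl v → t u < t v then permTP σ h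
  else singletonTP t

lemma charF_permTP' {σ : Equiv.Perm (V ⊕ V)}
    (hσ : ∀ u v : V, σ (Sum.inl u) = Sum.inl v → t u < t v) (u w : V) :
    charF (permTP' t σ) u w = if σnext σ u = some w then 1 else 0 := by
  rw [permTP', dif_pos hσ, charF_permTP]

lemma charG_permTP' {σ : Equiv.Perm (V ⊕ V)}
    (hσ : ∀ u v : V, σ (Sum.inl u) = Sum.inl v → t u < t v) (v : V) :
    charG (permTP' t σ) v = if σprev σ v = none then 1 else 0 := by
  rw [permTP', dif_pos hσ, charG_permTP]

lemma charH_permTP' {σ : Equiv.Perm (V ⊕ V)}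
    (hσ : ∀ u v : V, σ (Sum.inl u) = Sum.inl v → t u < t v) (v : V) :
    charH (permTP' t σ) v = if σnext σ v = none then 1 else 0 := by
  rw [permTP', dif_pos hσ, charH_permTP]

end PermTP'

/-- The tracking polytope
`P = {(f,g,h) ≥ 0 : ∀v, g(v) + f(δ⁻(v)) = 1, h(v) + f(δ⁺(v)) = 1}` equals the convex
hull of the characteristic vectors of track partitions of `V`. -/
theorem tracking_polytope_eq_convexHull_trackPartitions (t : V → ℝ) :
    {x : (V → V → ℝ) × (V → ℝ) × (V → ℝ) |
        (∀ u w, 0 ≤ x.1 u w) ∧ (∀ v, 0 ≤ x.2.1 v) ∧ (∀ v, 0 ≤ x.2.2 v) ∧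
        (∀ u w, x.1 u w ≠ 0 → t u < t w) ∧
        (∀ v, x.2.1 v + ∑ u, x.1 u v = 1) ∧
        (∀ v, x.2.2 v + ∑ w, x.1 v w = 1)} =
      convexHull ℝ
        {x | ∃ T : TrackPartition V t, x = (charF T, charG T, charH T)} := by
  apply Set.Subset.antisymm
  · -- hard direction
    rintro x ⟨h1, h2, h3, h4, h5, h6⟩
    cases isEmpty_or_nonempty V with
    | inl hemp =>
      apply subset_convexHull
      refine ⟨singletonTP t, ?_⟩
      refine Prod.ext ?_ (Prod.ext ?_ ?_)
      · funext u; exact isEmptyElim u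
      · funext v; exact isEmptyElim v
      · funext v; exact isEmptyElim v
    | inr hne =>
      obtain ⟨w, hw0, hw1, hwM⟩ :=
        exists_eq_sum_perm_of_mem_doublyStochastic (trackMatrix_mem x h1 h2 h3 h5 h6)
      have hMentry : ∀ i j, trackMatrix x i j =
          ∑ σ : Equiv.Perm (V ⊕ V), w σ * (if σ i = j then 1 else 0) := by
        intro i j
        rw [← hwM, Matrix.sum_apply]
        refine Finset.sum_congr rfl fun σ _ => ?_
        rw [Matrix.smul_apply, smul_eq_mul]
        congr 1
        simp [Equiv.Perm.permMatrix, PEquiv.toMatrix_apply, Equiv.toPEquiv_apply,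
          Option.mem_def, eq_comm]
      have hsupp : ∀ σ : Equiv.Perm (V ⊕ V), w σ ≠ 0 →
          ∀ u v : V, σ (Sum.inl u) = Sum.inl v → t u < t v := by
        intro σ hwσ u v he
        apply h4
        have hpos : 0 < trackMatrix x (Sum.inl u) (Sum.inl v) := by
          rw [hMentry]
          have hle : w σ * (if σ (Sum.inl u) = Sum.inl v then (1:ℝ) else 0) ≤
              ∑ σ' : Equiv.Perm (V ⊕ V), w σ' * (if σ' (Sum.inl u) = Sum.inl v then 1 else 0) :=
            Finset.single_le_sum
              (f := fun σ' => w σ' * (if σ' (Sum.inl u) = Sum.inl v then (1:ℝ) else 0))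
              (fun σ' _ => mul_nonneg (hw0 σ') (by split <;> norm_num)) (mem_univ σ)
          rw [if_pos he, mul_one] at hle
          exact lt_of_lt_of_le (lt_of_le_of_ne (hw0 σ) (Ne.symm hwσ)) hle
        exact ne_of_gt hpos
      have e1 : ∀ u v, (∑ σ : Equiv.Perm (V ⊕ V), w σ * charF (permTP' t σ) u v) = x.1 u v := by
        intro u v
        rw [show x.1 u v = trackMatrix x (Sum.inl u) (Sum.inl v) from rfl, hMentry]
        refine Finset.sum_congr rfl fun σ _ => ?_
        by_cases hwσ : w σ = 0
        · rw [hwσ, zero_mul, zero_mul]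
        · rw [charF_permTP' (hsupp σ hwσ)]
          congr 1
          simp only [σnext_eq_some]
      have e2 : ∀ v, (∑ σ : Equiv.Perm (V ⊕ V), w σ * charG (permTP' t σ) v) = x.2.1 v := by
        intro v
        have hA : ∑ k : V, trackMatrix x (Sum.inr k) (Sum.inl v) = x.2.1 v := by
          show (∑ _k : V, x.2.1 v / (Fintype.card V)) = x.2.1 v
          rw [Finset.sum_const, Finset.card_univ, nsmul_eq_mul]
          have hn : (0 : ℝ) < (Fintype.card V : ℝ) := by exact_mod_cast Fintype.card_pos
          field_simp
        rw [← hA, Finset.sum_congr rfl (fun k _ => hMentry (Sum.inr k) (Sum.inl v)),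
          Finset.sum_comm]
        refine Finset.sum_congr rfl fun σ _ => ?_
        rw [← Finset.mul_sum]
        by_cases hwσ : w σ = 0
        · rw [hwσ, zero_mul, zero_mul]
        · rw [charG_permTP' (hsupp σ hwσ)]
          congr 1
          symm
          cases hs : σ.symm (Sum.inl v) with
          | inl u =>
            rw [if_neg (by simp [σprev_eq_some.mpr hs])]
            apply Finset.sum_eq_zero
            intro k _
            rw [if_neg]
            intro hk
            have hk' : σ.symm (Sum.inl v) = Sum.inr k := by
              rw [← hk, Equiv.symm_apply_apply]
            rw [hs] at hk'
            cases hk'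
          | inr k0 =>
            rw [if_pos (σprev_eq_none hs)]
            have hiff : ∀ k : V, (σ (Sum.inr k) = Sum.inl v) ↔ k = k0 := by
              intro k
              constructor
              · intro hk
                have hk' : σ.symm (Sum.inl v) = Sum.inr k := by
                  rw [← hk, Equiv.symm_apply_apply]
                rw [hs] at hk'
                exact (Sum.inr.injEq _ _ ▸ hk' : k0 = k).symm
              · rintro rfl
                rw [← hs, Equiv.apply_symm_apply]
            rw [Finset.sum_congr rfl fun k _ => if_congr (hiff k) rfl rfl,
              Finset.sum_ite_eq' univ k0 fun _ => (1:ℝ)]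
            simp
      have e3 : ∀ v, (∑ σ : Equiv.Perm (V ⊕ V), w σ * charH (permTP' t σ) v) = x.2.2 v := by
        intro v
        have hA : ∑ k : V, trackMatrix x (Sum.inl v) (Sum.inr k) = x.2.2 v := by
          show (∑ _k : V, x.2.2 v / (Fintype.card V)) = x.2.2 v
          rw [Finset.sum_const, Finset.card_univ, nsmul_eq_mul]
          have hn : (0 : ℝ) < (Fintype.card V : ℝ) := by exact_mod_cast Fintype.card_pos
          field_simp
        rw [← hA, Finset.sum_congr rfl (fun k _ => hMentry (Sum.inl v) (Sum.inr k)),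
          Finset.sum_comm]
        refine Finset.sum_congr rfl fun σ _ => ?_
        rw [← Finset.mul_sum]
        by_cases hwσ : w σ = 0
        · rw [hwσ, zero_mul, zero_mul]
        · rw [charH_permTP' (hsupp σ hwσ)]
          congr 1
          symm
          cases hs : σ (Sum.inl v) with
          | inl u =>
            rw [if_neg (by simp [σnext_eq_some.mpr hs])]
            apply Finset.sum_eq_zero
            intro k _
            rw [if_neg]
            exact fun hk => Sum.inl_ne_inr hk
          | inr k0 =>
            rw [if_pos (σnext_eq_none hs)]
            have hiff : ∀ k : V, ((Sum.inr k0 : V ⊕ V) = Sum.inr k) ↔ k = k0 := by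
              intro k; simp [eq_comm]
            rw [Finset.sum_congr rfl fun k _ => if_congr (hiff k) rfl rfl,
              Finset.sum_ite_eq' univ k0 fun _ => (1:ℝ)]
            simp
      apply mem_convexHull_of_exists_fintype
        (s := {x : (V → V → ℝ) × (V → ℝ) × (V → ℝ) |
          ∃ T : TrackPartition V t, x = (charF T, charG T, charH T)}) w
        (fun σ => ((charF (permTP' t σ), charG (permTP' t σ), charH (permTP' t σ)) :
          (V → V → ℝ) × (V → ℝ) × (V → ℝ)))
        hw0 hw1 (fun σ => ⟨permTP' t σ, rfl⟩)
      refine Prod.ext ?_ (Prod.ext ?_ ?_)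
      · show (∑ σ : Equiv.Perm (V ⊕ V),
          w σ • ((charF (permTP' t σ), charG (permTP' t σ), charH (permTP' t σ)) :
            (V → V → ℝ) × (V → ℝ) × (V → ℝ))).1 = x.1
        rw [Prod.fst_sum]
        funext u v
        simp only [Prod.smul_fst, Finset.sum_apply, Pi.smul_apply, smul_eq_mul]
        exact e1 u v
      · show (∑ σ : Equiv.Perm (V ⊕ V),
          w σ • ((charF (permTP' t σ), charG (permTP' t σ), charH (permTP' t σ)) :
            (V → V → ℝ) × (V → ℝ) × (V → ℝ))).2.1 = x.2.1
        rw [Prod.snd_sum, Prod.fst_sum]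
        funext v
        simp only [Prod.smul_snd, Prod.smul_fst, Finset.sum_apply, Pi.smul_apply, smul_eq_mul]
        exact e2 v
      · show (∑ σ : Equiv.Perm (V ⊕ V),
          w σ • ((charF (permTP' t σ), charG (permTP' t σ), charH (permTP' t σ)) :
            (V → V → ℝ) × (V → ℝ) × (V → ℝ))).2.2 = x.2.2
        rw [Prod.snd_sum, Prod.snd_sum]
        funext v
        simp only [Prod.smul_snd, Finset.sum_apply, Pi.smul_apply, smul_eq_mul]
        exact e3 v
  · -- easy direction
    apply convexHull_min
    · rintro y ⟨T, rfl⟩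
      exact ⟨charF_nonneg T, charG_nonneg T, charH_nonneg T,
        fun u w h => charF_pos_time T h, sum_charF_in T, sum_charF_out T⟩
    · rintro x ⟨hx1, hx2, hx3, hx4, hx5, hx6⟩ y ⟨hy1, hy2, hy3, hy4, hy5, hy6⟩ a b ha hb hab
      refine ⟨?_, ?_, ?_, ?_, ?_, ?_⟩
      · intro u v
        show 0 ≤ a * x.1 u v + b * y.1 u v
        exact add_nonneg (mul_nonneg ha (hx1 u v)) (mul_nonneg hb (hy1 u v))
      · intro v
        show 0 ≤ a * x.2.1 v + b * y.2.1 v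
        exact add_nonneg (mul_nonneg ha (hx2 v)) (mul_nonneg hb (hy2 v))
      · intro v
        show 0 ≤ a * x.2.2 v + b * y.2.2 v
        exact add_nonneg (mul_nonneg ha (hx3 v)) (mul_nonneg hb (hy3 v))
      · intro u v hne
        by_contra hlt
        apply hne
        have hx0 : x.1 u v = 0 := by
          by_contra hc; exact hlt (hx4 u v hc)
        have hy0 : y.1 u v = 0 := by
          by_contra hc; exact hlt (hy4 u v hc)
        show a * x.1 u v + b * y.1 u v = 0
        rw [hx0, hy0]; ring
      · intro v
        show a * x.2.1 v + b * y.2.1 v + ∑ u, (a * x.1 u v + b * y.1 u v) = 1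
        rw [Finset.sum_add_distrib, ← Finset.mul_sum, ← Finset.mul_sum]
        linear_combination a * hx5 v + b * hy5 v + hab
      · intro v
        show a * x.2.2 v + b * y.2.2 v + ∑ u, (a * x.1 v u + b * y.1 v u) = 1
        rw [Finset.sum_add_distrib, ← Finset.mul_sum, ← Finset.mul_sum]
        linear_combination a * hx6 v + b * hy6 v + hab
end
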